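/- For every finite list of computable predictors there exists a single computable sequence on which every predictor in the list makes infinitely many prediction errors: for every L : List (List Bool → Bool) such that every p ∈ L is computable, there exists a computable ω : ℕ → Bool such that for every p ∈ L and every m ∈ ℕ there exists n ≥ m with p applied to the length-n prefix [ω 0, …, ω (n−1)] not equal to ω n. In particular, no predictor in L learns to predict ω. -/

import Mathlib

lemma List.getD_concat_len {α : Type*} (l : List α) (a d : α) :
    (l ++ [a]).getD l.length d = a := by
  simp [List.getD_eq_getElem?_getD, List.getElem?_concat_length]


/-- The length-`n` prefix `[ω 0, …, ω (n−1)]` of a binary sequence `ω`. -/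
def prefixList (ω : ℕ → Bool) (n : ℕ) : List Bool := (List.range n).map ω

/-- A predictor `p` learns to predict the sequence `ω` if from some point on it
always predicts the next symbol correctly. -/
def LearnsToPredict (p : List Bool → Bool) (ω : ℕ → Bool) : Prop :=
  ∃ m : ℕ, ∀ n ≥ m, p (prefixList ω n) = ω n

/-- One diagonalization step: extend `l` by the negation of the prediction of
predictor number `n % L.length`. -/
def diagStep (L : List (List Bool → Bool)) (n : ℕ) (l : List Bool) : List Bool :=
  l ++ [! ((L.map fun p => p l).getD (n % L.length) false)]

/-- Prefixes of the diagonal sequence. -/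
def diagF (L : List (List Bool → Bool)) : ℕ → List Bool
  | 0 => []
  | n + 1 => diagStep L n (diagF L n)

/-- The diagonal sequence itself. -/
def diagω (L : List (List Bool → Bool)) (n : ℕ) : Bool :=
  (diagF L (n + 1)).getD n false

lemma comp_mapApply (L : List (List Bool → Bool)) (hL : ∀ p ∈ L, Computable p) :
    Computable fun l : List Bool => L.map fun p => p l := by
  induction L with
  | nil => exact Computable.const []
  | cons p L ih =>
      have h1 : Computable p := hL p List.mem_cons_self
      have h2 := ih fun q hq => hL q (List.mem_cons_of_mem _ hq)
      exact (Primrec.list_cons.to_comp.comp h1 h2 : _)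

lemma comp_diagF (L : List (List Bool → Bool)) (hL : ∀ p ∈ L, Computable p) :
    Computable (diagF L) := by
  have hstep : Computable₂ fun (_ : ℕ) (x : ℕ × List Bool) => diagStep L x.1 x.2 := by
    have hF := comp_mapApply L hL
    have hmod : Computable fun x : ℕ × ℕ × List Bool => x.2.1 % L.length :=
      (Primrec.nat_mod.to_comp.comp (Computable.fst.comp Computable.snd)
        (Computable.const L.length) : _)
    have hmap : Computable fun x : ℕ × ℕ × List Bool => L.map fun p => p x.2.2 :=
      hF.comp (Computable.snd.comp Computable.snd)
    have hb : Computable fun x : ℕ × ℕ × List Bool =>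
        ! ((L.map fun p => p x.2.2).getD (x.2.1 % L.length) false) :=
      Primrec.not.to_comp.comp
        ((Primrec.list_getD false).to_comp.comp hmap hmod)
    exact (Primrec.list_append.to_comp.comp (Computable.snd.comp Computable.snd)
      (Primrec.list_cons.to_comp.comp hb (Computable.const []))).to₂
  have := Computable.nat_rec (f := fun n : ℕ => n) (g := fun _ : ℕ => ([] : List Bool))
    (h := fun (a : ℕ) (x : ℕ × List Bool) => diagStep L x.1 x.2)
    Computable.id (Computable.const []) hstep
  refine this.of_eq fun n => ?_
  induction n with
  | zero => rfl
  | succ n ih => simp [diagF, ih]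

lemma comp_diagω (L : List (List Bool → Bool)) (hL : ∀ p ∈ L, Computable p) :
    Computable (diagω L) := by
  have h1 : Computable fun n : ℕ => diagF L (n + 1) :=
    (comp_diagF L hL).comp (Primrec.succ.to_comp)
  exact ((Primrec.list_getD false).to_comp.comp h1 Computable.id : _)

lemma diagF_length (L : List (List Bool → Bool)) (n : ℕ) : (diagF L n).length = n := by
  induction n with
  | zero => rfl
  | succ n ih => simp [diagF, diagStep, ih]

lemma diagω_eq (L : List (List Bool → Bool)) (n : ℕ) :
    diagω L n = ! ((L.map fun p => p (diagF L n)).getD (n % L.length) false) := by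
  have h := List.getD_concat_len (diagF L n)
    (! ((L.map fun p => p (diagF L n)).getD (n % L.length) false)) false
  rw [diagF_length] at h
  simpa [diagω, diagF, diagStep] using h

lemma diagF_eq_prefix (L : List (List Bool → Bool)) (n : ℕ) :
    diagF L n = prefixList (diagω L) n := by
  induction n with
  | zero => rfl
  | succ n ih =>
      have hωn : diagω L n = ! ((L.map fun p => p (diagF L n)).getD (n % L.length) false) :=
        diagω_eq L n
      show diagStep L n (diagF L n) = prefixList (diagω L) (n + 1)
      rw [diagStep, ih]
      simp [prefixList, List.range_succ, hωn, ih]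

theorem stmt_8 :
    ∀ L : List (List Bool → Bool), (∀ p ∈ L, Computable p) →
      ∃ ω : ℕ → Bool, Computable ω ∧
        (∀ p ∈ L, ∀ m : ℕ, ∃ n ≥ m, p (prefixList ω n) ≠ ω n) ∧
        ∀ p ∈ L, ¬ LearnsToPredict p ω := by
  intro L hL
  have herr : ∀ p ∈ L, ∀ m : ℕ, ∃ n ≥ m, p (prefixList (diagω L) n) ≠ diagω L n := by
    intro p hp m
    obtain ⟨i, hi, rfl⟩ := List.mem_iff_getElem.1 hp
    have hk : 0 < L.length := lt_of_le_of_lt (Nat.zero_le _) hi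
    refine ⟨m * L.length + i, ?_, ?_⟩
    · calc m = m * 1 := (mul_one m).symm
        _ ≤ m * L.length := Nat.mul_le_mul_left m hk
        _ ≤ m * L.length + i := Nat.le_add_right _ _
    · have hmod : (m * L.length + i) % L.length = i := by
        rw [Nat.add_comm, Nat.add_mul_mod_self_right, Nat.mod_eq_of_lt hi]
      have h := diagω_eq L (m * L.length + i)
      rw [hmod, List.getD_eq_getElem _ _ (by simpa using hi), List.getElem_map,
        diagF_eq_prefix] at h
      rw [h]
      simp
  refine ⟨diagω L, comp_diagω L hL, herr, ?_⟩
  rintro p hp ⟨m, hm⟩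
  obtain ⟨n, hn, hne⟩ := herr p hp m
  exact hne (hm n hn)
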